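/- Let $\Field$ be a field and $n \geq 1$. Intersection with $\SL_n(\Field)$ gives an inclusion-preserving bijection between the parabolic subgroups of $\GL_n(\Field)$ (stabilizers of flags of nonzero proper subspaces of $\Field^n$) and the parabolic subgroups of $\SL_n(\Field)$; equivalently, two flags of subspaces of $\Field^n$ have the same stabilizer in $\GL_n(\Field)$ if and only if they have the same stabilizer in $\SL_n(\Field)$, and the flag stabilized is determined by the stabilizer in $\SL_n(\Field)$. -/

import Mathlib

section
variable (F : Type*) [Field F] (n : ℕ)

/-- A flag of `k` nonzero proper subspaces of `F^n`: a strictly increasing chain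
`0 ⊊ V₀ ⊊ ⋯ ⊊ V_{k-1} ⊊ F^n`. -/
def FlagIn (k : ℕ) : Type _ :=
  {V : Fin k → Submodule F (Fin n → F) //
    StrictMono V ∧ ∀ i, V i ≠ ⊥ ∧ V i ≠ ⊤}

/-- The stabilizer in `GL_n(F)` of a flag, as a set. -/
def glFlagStab {k : ℕ} (V : FlagIn F n k) : Set (Matrix.GeneralLinearGroup (Fin n) F) :=
  {g | ∀ i, Submodule.map (Matrix.mulVecLin (g : Matrix (Fin n) (Fin n) F)) (V.1 i) = V.1 i}

/-- The stabilizer in `SL_n(F)` of a flag, as a set. -/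
def slFlagStab {k : ℕ} (V : FlagIn F n k) : Set (Matrix.SpecialLinearGroup (Fin n) F) :=
  {g | ∀ i, Submodule.map (Matrix.mulVecLin (g : Matrix (Fin n) (Fin n) F)) (V.1 i) = V.1 i}

end

section Aux

variable {F : Type*} [Field F] {n k : ℕ}

open Matrix Submodule

lemma aux_dot_eq (f : (Fin n → F) →ₗ[F] F) (x : Fin n → F) :
    (fun j => f (Pi.single j 1)) ⬝ᵥ x = f x := by
  have hx : x = ∑ j, x j • (Pi.single j 1 : Fin n → F) := by
    ext i
    simp [Pi.single_apply, Finset.sum_ite_eq']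
  conv_rhs => rw [hx]
  rw [map_sum]
  simp [dotProduct, mul_comm]

lemma aux_transvection_det (u c : Fin n → F) (h : c ⬝ᵥ u = 0) :
    (1 + vecMulVec u c).det = 1 := by
  rw [vecMulVec_eq Unit, det_one_add_replicateCol_mul_replicateRow, h, add_zero]

lemma aux_transvection_apply (u c : Fin n → F) (x : Fin n → F) :
    (1 + vecMulVec u c).mulVecLin x = x + (c ⬝ᵥ x) • u := by
  rw [mulVecLin_apply, add_mulVec, one_mulVec]
  congr 1
  ext i
  rw [Pi.smul_apply, smul_eq_mul]
  show (fun j => vecMulVec u c i j) ⬝ᵥ x = _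
  rw [dotProduct, dotProduct, Finset.sum_mul]
  exact Finset.sum_congr rfl fun j _ => by simp [vecMulVec_apply]; ring

lemma aux_sq_zero (u c : Fin n → F) (h : c ⬝ᵥ u = 0) :
    vecMulVec u c * vecMulVec u c = 0 := by
  ext i j
  simp only [mul_apply, vecMulVec_apply, Matrix.zero_apply]
  have : ∑ l, u i * c l * (u l * c j) = (u i * c j) * (c ⬝ᵥ u) := by
    rw [dotProduct, Finset.mul_sum]
    exact Finset.sum_congr rfl fun l _ => by ring
  rw [this, h, mul_zero]

lemma aux_transvection_stab (V : FlagIn F n k) {u c : Fin n → F} (h0 : c ⬝ᵥ u = 0)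
    (h : ∀ i : Fin k, (∀ x ∈ V.1 i, c ⬝ᵥ x = 0) ∨ u ∈ V.1 i) (i : Fin k) :
    Submodule.map (1 + vecMulVec u c).mulVecLin (V.1 i) = V.1 i := by
  set A : Matrix (Fin n) (Fin n) F := 1 + vecMulVec u c with hA
  set B : Matrix (Fin n) (Fin n) F := 1 + vecMulVec (-u) c with hB
  have hneg : vecMulVec (-u) c = -vecMulVec u c := by
    ext a b; simp [vecMulVec_apply]
  have h0' : c ⬝ᵥ (-u) = 0 := by rw [dotProduct_neg, h0, neg_zero]
  have hBA : B * A = 1 := by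
    rw [hA, hB, hneg]
    have hsq := aux_sq_zero u c h0
    have : (1 + -vecMulVec u c) * (1 + vecMulVec u c)
        = 1 - vecMulVec u c * vecMulVec u c := by noncomm_ring
    rw [this, hsq, sub_zero]
  have hmemA : ∀ x ∈ V.1 i, A.mulVecLin x ∈ V.1 i := by
    intro x hx
    rw [hA, aux_transvection_apply]
    rcases h i with hc | hu
    · rw [hc x hx, zero_smul, add_zero]; exact hx
    · exact add_mem hx (smul_mem _ _ hu)
  have hmemB : ∀ x ∈ V.1 i, B.mulVecLin x ∈ V.1 i := by
    intro x hx
    rw [hB, aux_transvection_apply]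
    rcases h i with hc | hu
    · rw [hc x hx, zero_smul, add_zero]; exact hx
    · exact add_mem hx (smul_mem _ _ (neg_mem hu))
  refine le_antisymm (Submodule.map_le_iff_le_comap.mpr fun x hx => hmemA x hx) ?_
  intro x hx
  have hAB : A * B = 1 := mul_eq_one_comm.mp hBA
  have hxx : x = A.mulVecLin (B.mulVecLin x) := by
    conv_rhs => rw [mulVecLin_apply, mulVecLin_apply, mulVec_mulVec, hAB, one_mulVec]
  rw [hxx]
  exact Submodule.mem_map_of_mem (hmemB x hx)


/-- The extended chain `⊥ = C 0 ⊊ V 0 ⊊ ⋯ ⊊ V (k-1) ⊊ ⊤ = C (k+1) = C (k+2) = ⋯`. -/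
def chainC (V : FlagIn F n k) : ℕ → Submodule F (Fin n → F) :=
  fun j => if h : 1 ≤ j ∧ j ≤ k then V.1 ⟨j - 1, by omega⟩ else if j = 0 then ⊥ else ⊤

lemma chainC_zero (V : FlagIn F n k) : chainC V 0 = ⊥ := by simp [chainC]

lemma chainC_top (V : FlagIn F n k) {j : ℕ} (hj : k < j) : chainC V j = ⊤ := by
  unfold chainC
  rw [dif_neg (by omega), if_neg (by omega)]

lemma chainC_succ (V : FlagIn F n k) (i : Fin k) : chainC V (i + 1) = V.1 i := by
  unfold chainC
  rw [dif_pos ⟨by omega, by omega⟩]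
  exact congrArg V.1 (Fin.ext (by simp))

lemma chainC_mono (V : FlagIn F n k) : Monotone (chainC V) := by
  intro j j' hjj'
  unfold chainC
  by_cases h1 : 1 ≤ j ∧ j ≤ k
  · rw [dif_pos h1]
    by_cases h2 : 1 ≤ j' ∧ j' ≤ k
    · rw [dif_pos h2]
      exact V.2.1.monotone (by simp only [Fin.mk_le_mk]; omega)
    · rw [dif_neg h2, if_neg (by omega)]
      exact le_top
  · rw [dif_neg h1]
    by_cases h3 : j = 0
    · rw [if_pos h3]
      exact bot_le
    · rw [if_neg h3, dif_neg (by omega), if_neg (by omega)]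

lemma flag_range_eq (hn : 1 ≤ n) (V : FlagIn F n k) :
    Set.range V.1 = {W : Submodule F (Fin n → F) | W ≠ ⊥ ∧ W ≠ ⊤ ∧
      ∀ A : Matrix (Fin n) (Fin n) F, A.det = 1 →
        (∀ i, Submodule.map A.mulVecLin (V.1 i) = V.1 i) →
        Submodule.map A.mulVecLin W = W} := by
  apply Set.eq_of_subset_of_subset
  · rintro W ⟨i, rfl⟩
    exact ⟨(V.2.2 i).1, (V.2.2 i).2, fun A _ hA => hA i⟩
  rintro W ⟨hWb, hWt, hstab⟩
  classical
  -- ℓ : least j with W ≤ chainC V j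
  have hex : ∃ j, W ≤ chainC V j := ⟨k + 1, by rw [chainC_top V (by omega)]; exact le_top⟩
  set ℓ := Nat.find hex with hℓ
  have hl : W ≤ chainC V ℓ := Nat.find_spec hex
  have hl0 : 1 ≤ ℓ := by
    rcases Nat.eq_zero_or_pos ℓ with h | h
    · exfalso; apply hWb
      rw [← le_bot_iff, ← chainC_zero V, ← h]; exact hl
    · exact h
  have hnot : ¬ W ≤ chainC V (ℓ - 1) := Nat.find_min hex (by omega)
  obtain ⟨w, hwW, hw⟩ := SetLike.not_le_iff_exists.mp hnot
  -- step 1 : chainC V (ℓ-1) ≤ W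
  have hsub : chainC V (ℓ - 1) ≤ W := by
    intro u hu
    obtain ⟨f, hfw, hfker⟩ :=
      Submodule.exists_dual_map_eq_bot_of_notMem (p := chainC V (ℓ - 1)) hw inferInstance
    set g : (Fin n → F) →ₗ[F] F := (f w)⁻¹ • f with hg
    have hgw : g w = 1 := by
      rw [hg]; simp only [LinearMap.smul_apply, smul_eq_mul]
      exact inv_mul_cancel₀ hfw
    have hgker : ∀ x ∈ chainC V (ℓ - 1), g x = 0 := by
      intro x hx
      have : f x = 0 := by
        have : f x ∈ Submodule.map f (chainC V (ℓ - 1)) := Submodule.mem_map_of_mem hx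
        rw [hfker] at this; exact this
      rw [hg]; simp [this]
    set c : Fin n → F := fun j => g (Pi.single j 1) with hc
    have hdc : ∀ x, c ⬝ᵥ x = g x := aux_dot_eq g
    have h0 : c ⬝ᵥ u = 0 := by rw [hdc]; exact hgker u hu
    have hcond : ∀ i : Fin k, (∀ x ∈ V.1 i, c ⬝ᵥ x = 0) ∨ u ∈ V.1 i := by
      intro i
      rcases le_or_gt ((i : ℕ) + 1) (ℓ - 1) with hle | hlt
      · left; intro x hx
        rw [hdc]
        exact hgker x (chainC_mono V hle (by rw [chainC_succ]; exact hx))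
      · right
        have : chainC V (ℓ - 1) ≤ chainC V ((i : ℕ) + 1) := chainC_mono V (by omega)
        rw [chainC_succ] at this
        exact this hu
    have hdet := aux_transvection_det u c h0
    have hstabi := aux_transvection_stab V h0 hcond
    have hmap := hstab _ hdet hstabi
    have hmem : w + u ∈ W := by
      have : (1 + vecMulVec u c).mulVecLin w ∈ Submodule.map (1 + vecMulVec u c).mulVecLin W :=
        Submodule.mem_map_of_mem hwW
      rw [hmap, aux_transvection_apply, hdc, hgw, one_smul] at this
      exact this
    have := sub_mem hmem hwW
    simpa using this
  -- step 2 : W = chainC V ℓ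
  have hWeq : W = chainC V ℓ := by
    by_contra hne
    obtain ⟨v, hvC, hvW⟩ := SetLike.exists_of_lt (lt_of_le_of_ne hl hne)
    have hwl : w ∈ chainC V ℓ := hl hwW
    -- w ∉ chainC V (ℓ-1) ⊔ span {v - w}
    have hwS : w ∉ chainC V (ℓ - 1) ⊔ Submodule.span F {v - w} := by
      intro hmem
      rw [Submodule.mem_sup] at hmem
      obtain ⟨m, hm, z, hz, hwz⟩ := hmem
      obtain ⟨a, rfl⟩ := Submodule.mem_span_singleton.mp hz
      rcases eq_or_ne a 0 with rfl | ha
      · apply hw; rw [zero_smul, add_zero] at hwz; rw [← hwz]; exact hm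
      · apply hvW
        have hmW : m ∈ W := hsub hm
        have : v = w + a⁻¹ • (w - m) := by
          have h1 : a • (v - w) = w - m := by rw [eq_sub_iff_add_eq, add_comm]; exact hwz
          have h2 : v - w = a⁻¹ • (w - m) := by rw [← h1, smul_smul, inv_mul_cancel₀ ha, one_smul]
          rw [← h2]; abel
        rw [this]
        exact add_mem hwW (smul_mem _ _ (sub_mem hwW hmW))
    obtain ⟨f, hfw, hfker⟩ :=
      Submodule.exists_dual_map_eq_bot_of_notMem (p := chainC V (ℓ - 1) ⊔ Submodule.span F {v - w})
        hwS inferInstance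
    set g : (Fin n → F) →ₗ[F] F := (f w)⁻¹ • f with hg
    have hgw : g w = 1 := by
      rw [hg]; simp only [LinearMap.smul_apply, smul_eq_mul]
      exact inv_mul_cancel₀ hfw
    have hgker : ∀ x ∈ chainC V (ℓ - 1) ⊔ Submodule.span F {v - w}, g x = 0 := by
      intro x hx
      have : f x = 0 := by
        have : f x ∈ Submodule.map f _ := Submodule.mem_map_of_mem hx
        rw [hfker] at this; exact this
      rw [hg]; simp [this]
    set c : Fin n → F := fun j => g (Pi.single j 1) with hc
    have hdc : ∀ x, c ⬝ᵥ x = g x := aux_dot_eq g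
    set u : Fin n → F := v - w with hu
    have h0 : c ⬝ᵥ u = 0 := by
      rw [hdc]
      exact hgker u (Submodule.mem_sup_right (Submodule.mem_span_singleton_self _))
    have huC : u ∈ chainC V ℓ := sub_mem hvC hwl
    have hcond : ∀ i : Fin k, (∀ x ∈ V.1 i, c ⬝ᵥ x = 0) ∨ u ∈ V.1 i := by
      intro i
      rcases le_or_gt ((i : ℕ) + 1) (ℓ - 1) with hle | hlt
      · left; intro x hx
        rw [hdc]
        exact hgker x (Submodule.mem_sup_left
          (chainC_mono V hle (by rw [chainC_succ]; exact hx)))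
      · right
        have : chainC V ℓ ≤ chainC V ((i : ℕ) + 1) := chainC_mono V (by omega)
        rw [chainC_succ] at this
        exact this huC
    have hdet := aux_transvection_det u c h0
    have hstabi := aux_transvection_stab V h0 hcond
    have hmap := hstab _ hdet hstabi
    apply hvW
    have : (1 + vecMulVec u c).mulVecLin w ∈ Submodule.map (1 + vecMulVec u c).mulVecLin W :=
      Submodule.mem_map_of_mem hwW
    rw [hmap, aux_transvection_apply, hdc, hgw, one_smul] at this
    have hv : w + u = v := by rw [hu]; abel
    rwa [hv] at this
  -- step 3 : conclude
  have hlk : ℓ ≤ k := by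
    by_contra hgt
    exact hWt (hWeq.trans (chainC_top V (by omega)))
  refine ⟨⟨ℓ - 1, by omega⟩, ?_⟩
  have hCV : chainC V ℓ = V.1 ⟨ℓ - 1, by omega⟩ := by
    unfold chainC
    rw [dif_pos ⟨hl0, hlk⟩]
  exact (hWeq.trans hCV).symm

lemma aux_stab_congr {k₁ k₂ : ℕ} (V₁ : FlagIn F n k₁) (V₂ : FlagIn F n k₂)
    (h : Set.range V₁.1 = Set.range V₂.1) (M : Matrix (Fin n) (Fin n) F) :
    (∀ i, Submodule.map M.mulVecLin (V₁.1 i) = V₁.1 i) ↔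
    (∀ i, Submodule.map M.mulVecLin (V₂.1 i) = V₂.1 i) := by
  constructor
  · intro hM i
    obtain ⟨j, hj⟩ : V₂.1 i ∈ Set.range V₁.1 := by rw [h]; exact Set.mem_range_self i
    rw [← hj]; exact hM j
  · intro hM i
    obtain ⟨j, hj⟩ : V₁.1 i ∈ Set.range V₂.1 := by rw [← h]; exact Set.mem_range_self i
    rw [← hj]; exact hM j

lemma aux_range_eq (hn : 1 ≤ n) {k₁ k₂ : ℕ} (V₁ : FlagIn F n k₁) (V₂ : FlagIn F n k₂)
    (h : ∀ A : Matrix (Fin n) (Fin n) F, A.det = 1 →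
      ((∀ i, Submodule.map A.mulVecLin (V₁.1 i) = V₁.1 i) ↔
       (∀ i, Submodule.map A.mulVecLin (V₂.1 i) = V₂.1 i))) :
    Set.range V₁.1 = Set.range V₂.1 := by
  rw [flag_range_eq hn V₁, flag_range_eq hn V₂]
  ext W
  exact ⟨fun ⟨hb, ht, hs⟩ => ⟨hb, ht, fun A hd hA => hs A hd ((h A hd).mpr hA)⟩,
         fun ⟨hb, ht, hs⟩ => ⟨hb, ht, fun A hd hA => hs A hd ((h A hd).mp hA)⟩⟩

end Aux

/-- Two flags of nonzero proper subspaces of `F^n` have the same stabilizer in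
`GL_n(F)` if and only if they have the same stabilizer in `SL_n(F)`; moreover a flag
is determined (as a chain of subspaces) by its stabilizer in `SL_n(F)`.  This is the
bijection, given by intersecting with `SL_n(F)`, between parabolic subgroups of
`GL_n(F)` and of `SL_n(F)`. -/
theorem parabolic_gl_sl_bijection (F : Type*) [Field F] (n : ℕ) (hn : 1 ≤ n)
    (k₁ k₂ : ℕ) (V₁ : FlagIn F n k₁) (V₂ : FlagIn F n k₂) :
    (glFlagStab F n V₁ = glFlagStab F n V₂ ↔ slFlagStab F n V₁ = slFlagStab F n V₂) ∧
    (slFlagStab F n V₁ = slFlagStab F n V₂ → Set.range V₁.1 = Set.range V₂.1) := by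
  have sl_range : slFlagStab F n V₁ = slFlagStab F n V₂ →
      Set.range V₁.1 = Set.range V₂.1 := by
    intro hsl
    apply aux_range_eq hn
    intro A hd
    have := Set.ext_iff.mp hsl (⟨A, hd⟩ : Matrix.SpecialLinearGroup (Fin n) F)
    exact this
  have gl_range : glFlagStab F n V₁ = glFlagStab F n V₂ →
      Set.range V₁.1 = Set.range V₂.1 := by
    intro hgl
    apply aux_range_eq hn
    intro A hd
    have hu : IsUnit A.det := by rw [hd]; exact isUnit_one
    have := Set.ext_iff.mp hgl (Matrix.nonsingInvUnit A hu)
    simpa [glFlagStab, Matrix.nonsingInvUnit] using this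
  have range_gl : Set.range V₁.1 = Set.range V₂.1 →
      glFlagStab F n V₁ = glFlagStab F n V₂ :=
    fun h => Set.ext fun g => aux_stab_congr V₁ V₂ h _
  have range_sl : Set.range V₁.1 = Set.range V₂.1 →
      slFlagStab F n V₁ = slFlagStab F n V₂ :=
    fun h => Set.ext fun g => aux_stab_congr V₁ V₂ h _
  exact ⟨⟨fun h => range_sl (gl_range h), fun h => range_gl (sl_range h)⟩, sl_range⟩
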